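/- Let d, k, m be integers satisfying d ≥ 2, k ≥ d + 1, and m ≥ 2d − 1, and let n ≥ 1. Let X be a set with kn elements and let X = X₁ ∪ X₂ ∪ … ∪ X_m be an m-coloring of X satisfying condition (★): for every t ∈ {1, …, d−1} and every subset I ⊆ {1, …, m} with |I| = t, Σ_{i∈I} |X_i| ≤ (k−d+t)n. Then there exist two distinct color classes such that the (m−1)-coloring of X obtained by merging them into a single color class still satisfies condition (★). -/

import Mathlib

private lemma merge_arith1 (d e M : ℕ) (hd : 2 ≤ d) (he : 1 ≤ e) (hM : 2 * d - 1 ≤ M) :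
    2 * (d + e) ≤ M * (e + 1) := by
  have h1 : (2 * d - 1) * (e + 1) ≤ M * (e + 1) := Nat.mul_le_mul_right _ hM
  have h2 : 2 * (d + e) ≤ (2 * d - 1) * (e + 1) := by
    obtain ⟨d', rfl⟩ : ∃ d', d = d' + 2 := ⟨d - 2, by omega⟩
    have h3 : 2 * (d' + 2) - 1 = 2 * d' + 3 := by omega
    rw [h3]
    nlinarith
  omega

private lemma merge_arith2 (d e p t' : ℕ) (hd : 2 ≤ d) (he : 1 ≤ e)
    (hm : 2 * d - 1 ≤ (t' + 2) + 1 + p) :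
    2 * (d + e) + p * (e + (t' + 1)) ≤ (p + 2) * (e + (t' + 2)) := by
  have h1 : (p + 2) * (e + (t' + 2)) = p * (e + (t' + 1)) + (p + 2 * e + 2 * t' + 4) := by ring
  omega

theorem merging_colors_lemma
    {α : Type*} [DecidableEq α] (d k m n : ℕ)
    (hd : 2 ≤ d) (hk : d + 1 ≤ k) (hm : 2 * d - 1 ≤ m) (hn : 1 ≤ n)
    (X : Finset α) (C : Fin m → Finset α)
    (hdisj : ∀ i j : Fin m, i ≠ j → Disjoint (C i) (C j))
    (hunion : Finset.univ.biUnion C = X)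
    (hcard : X.card = k * n)
    (hstar : ∀ t : ℕ, 1 ≤ t → t ≤ d - 1 → ∀ I : Finset (Fin m), I.card = t →
        ∑ i ∈ I, (C i).card ≤ (k - d + t) * n) :
    ∃ i j : Fin m, i ≠ j ∧
      -- the (m-1)-coloring obtained by merging classes `i` and `j` (indexed by
      -- `Fin m` with the index `j` removed, where class `i` becomes `C i ∪ C j`)
      -- still satisfies condition (★)
      (∀ t : ℕ, 1 ≤ t → t ≤ d - 1 → ∀ I : Finset (Fin m), j ∉ I → I.card = t →
        ∑ l ∈ I, (if l = i then (C i ∪ C j).card else (C l).card) ≤ (k - d + t) * n) := by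
  set f : Fin m → ℕ := fun i => (C i).card with hf
  obtain ⟨e, he, hke⟩ : ∃ e, 1 ≤ e ∧ k = d + e := ⟨k - d, by omega, by omega⟩
  have hkd : k - d = e := by omega
  have hm0 : 0 < m := by omega
  have htot : ∑ l : Fin m, f l = k * n := by
    rw [← hcard, ← hunion, Finset.card_biUnion]
    intro x _ y _ hxy; exact hdisj x y hxy
  obtain ⟨i, -, hi⟩ := Finset.exists_min_image Finset.univ f ⟨⟨0, hm0⟩, Finset.mem_univ _⟩
  have hi' : ∀ l, f i ≤ f l := fun l => hi l (Finset.mem_univ l)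
  have hane : (Finset.univ.erase i).Nonempty := by
    rw [← Finset.card_pos, Finset.card_erase_of_mem (Finset.mem_univ i), Finset.card_univ,
      Fintype.card_fin]
    omega
  obtain ⟨j, hjmem, hj⟩ := Finset.exists_min_image (Finset.univ.erase i) f hane
  have hji : j ≠ i := Finset.ne_of_mem_erase hjmem
  have hj' : ∀ l, l ≠ i → f j ≤ f l := fun l hl =>
    hj l (Finset.mem_erase.mpr ⟨hl, Finset.mem_univ l⟩)
  have hcardU : (C i ∪ C j).card = f i + f j :=
    Finset.card_union_of_disjoint (hdisj i j (Ne.symm hji))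
  refine ⟨i, j, Ne.symm hji, ?_⟩
  intro t ht1 htd I hjI hIt
  rw [hkd]
  by_cases hiI : i ∈ I
  · -- the merged class belongs to I
    have hsum : ∑ l ∈ I, (if l = i then (C i ∪ C j).card else f l)
        = (∑ l ∈ I.erase i, f l) + (f i + f j) := by
      rw [← Finset.sum_erase_add I _ hiI, hcardU, if_pos rfl]
      congr 1
      exact Finset.sum_congr rfl fun l hl => if_neg (Finset.ne_of_mem_erase hl)
    rw [hsum]
    set B := ∑ l ∈ I.erase i, f l with hB
    set A := f i + f j with hA
    set S : Finset (Fin m) := insert j I with hS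
    have hScard : S.card = t + 1 := by
      rw [hS, Finset.card_insert_of_notMem hjI, hIt]
    have hSsum : ∑ l ∈ S, f l = A + B := by
      rw [hS, Finset.sum_insert hjI, ← Finset.sum_erase_add I f hiI]
      omega
    -- complement
    set Rc := ∑ l ∈ Finset.univ \ S, f l with hRc
    have hcomp : Rc + (A + B) = k * n := by
      rw [hRc, ← hSsum, ← htot]
      exact Finset.sum_sdiff (Finset.subset_univ S)
    obtain ⟨p, hp⟩ : ∃ p, m = (t + 1) + p := by
      refine ⟨m - (t + 1), ?_⟩
      have : t + 1 ≤ m := by omega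
      omega
    have hpc : (Finset.univ \ S).card = p := by
      rw [Finset.card_sdiff_of_subset (Finset.subset_univ S), Finset.card_univ, Fintype.card_fin, hScard]
      omega
    have hAcomp : p * A ≤ 2 * Rc := by
      have h1 : ∀ l ∈ Finset.univ \ S, A ≤ 2 * f l := by
        intro l hl
        have hlS : l ∉ S := (Finset.mem_sdiff.mp hl).2
        have hli : l ≠ i := by rintro rfl; exact hlS (Finset.mem_insert_of_mem hiI)
        have h2 := hi' l
        have h3 := hj' l hli
        omega
      have h4 := Finset.card_nsmul_le_sum (Finset.univ \ S) (fun l => 2 * f l) A h1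
      rw [hpc, smul_eq_mul, ← Finset.mul_sum] at h4
      exact h4
    -- key inequality
    have h2 : (p + 2) * (A + B) ≤ 2 * (k * n) + p * B := by
      have e1 : (p + 2) * (A + B) = p * A + 2 * A + (p * B + 2 * B) := by ring
      linarith [hAcomp, hcomp]
    have hkey : (p + 2) * (A + B) ≤ (p + 2) * ((e + t) * n) := by
      rcases Nat.lt_or_ge t 2 with ht | ht
      · -- t = 1, B = 0
        have ht1' : t = 1 := by omega
        have hB0 : B = 0 := by
          have hBe : I.erase i = ∅ := by
            rw [← Finset.card_eq_zero, Finset.card_erase_of_mem hiI, hIt, ht1']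
          rw [hB, hBe, Finset.sum_empty]
        have hineq : 2 * k ≤ (p + 2) * (e + 1) := by
          have hpm : p + 2 = m := by omega
          rw [hpm, hke]
          exact merge_arith1 d e m hd he hm
        calc (p + 2) * (A + B) ≤ 2 * (k * n) + p * B := h2
          _ = (2 * k) * n := by rw [hB0]; ring
          _ ≤ ((p + 2) * (e + 1)) * n := Nat.mul_le_mul_right n hineq
          _ = (p + 2) * ((e + t) * n) := by rw [ht1']; ring
      · -- t ≥ 2
        obtain ⟨t', rfl⟩ : ∃ t', t = t' + 2 := ⟨t - 2, by omega⟩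
        have hBbound : B ≤ (e + (t' + 1)) * n := by
          have h5 := hstar (t' + 1) (by omega) (by omega) (I.erase i)
            (by rw [Finset.card_erase_of_mem hiI, hIt]; omega)
          rw [hkd] at h5
          exact h5
        have hineq : 2 * k + p * (e + (t' + 1)) ≤ (p + 2) * (e + (t' + 2)) := by
          rw [hke]
          exact merge_arith2 d e p t' hd he (by omega)
        calc (p + 2) * (A + B) ≤ 2 * (k * n) + p * B := h2
          _ ≤ 2 * (k * n) + p * ((e + (t' + 1)) * n) :=
              Nat.add_le_add_left (Nat.mul_le_mul_left p hBbound) _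
          _ = (2 * k + p * (e + (t' + 1))) * n := by ring
          _ ≤ ((p + 2) * (e + (t' + 2))) * n := Nat.mul_le_mul_right n hineq
          _ = (p + 2) * ((e + (t' + 2)) * n) := by ring
    have hfin := Nat.le_of_mul_le_mul_left hkey (show 0 < p + 2 by omega)
    omega
  · -- merged class not in I: old condition applies directly
    have hsum : ∑ l ∈ I, (if l = i then (C i ∪ C j).card else f l) = ∑ l ∈ I, f l :=
      Finset.sum_congr rfl fun l hl => if_neg (by rintro rfl; exact hiI hl)
    rw [hsum]
    have h6 := hstar t ht1 htd I hIt
    rw [hkd] at h6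
    exact h6
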